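/- (Guruswami–Sudan list-recovery success condition.) Let C be an [L, k_O] Reed–Solomon code over F_Q with distinct evaluation points β_1,...,β_L, and let M be a Q×L multiplicity matrix with nonnegative integer entries and cost C(M) = (1/2) Σ_{i,j} m_{i,j}(m_{i,j}+1). If a codeword c = (f(β_1),...,f(β_L)) with deg f < k_O satisfies ⟨M, C_c⟩ ≥ √(2(k_O-1) C(M)), where C_c is the 0/1 matrix of c and ⟨·,·⟩ is the entrywise dot product, then any nonzero bivariate polynomial Q(x,y) of (1, k_O-1)-weighted degree less than √(2(k_O-1) C(M)) that passes through each point (β_j, α_i) with multiplicity m_{i,j} has y - f(x) as a factor. -/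

import Mathlib

open MvPolynomial

/-- The polynomial `P(x+β, y+α)` (variables `0 ↦ x`, `1 ↦ y`). -/
noncomputable def shiftAt {F : Type*} [CommRing F] (β α : F)
    (P : MvPolynomial (Fin 2) F) : MvPolynomial (Fin 2) F :=
  MvPolynomial.bind₁
    (fun i => MvPolynomial.X i + MvPolynomial.C (if i = 0 then β else α)) P

/-- `P` passes through the point `(β, α)` with multiplicity `m`: all Hasse derivatives of
total order `< m` vanish there, i.e. `P(x+β, y+α)` has no monomial of total degree `< m`. -/
def passesWithMult {F : Type*} [CommRing F] (P : MvPolynomial (Fin 2) F)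
    (β α : F) (m : ℕ) : Prop :=
  ∀ d : Fin 2 →₀ ℕ, d 0 + d 1 < m → MvPolynomial.coeff d (shiftAt β α P) = 0

lemma comp_eq_aeval' {F : Type*} [CommSemiring F] (f p : Polynomial F) :
    f.comp p = Polynomial.aeval p f := by
  rw [Polynomial.comp, Polynomial.aeval_def, Polynomial.algebraMap_eq]

/-- If substituting `y := f(x)` kills `P`, then `y - f(x)` divides `P`. -/
lemma dvd_of_subst_eq_zero {F : Type*} [CommRing F] (f : Polynomial F)
    (P : MvPolynomial (Fin 2) F)
    (h : MvPolynomial.aeval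
      (fun i : Fin 2 => if i = 0 then (Polynomial.X : Polynomial F) else f) P = 0) :
    (MvPolynomial.X 1 - Polynomial.aeval (MvPolynomial.X 0 : MvPolynomial (Fin 2) F) f) ∣ P := by
  set g : MvPolynomial (Fin 2) F := Polynomial.aeval (MvPolynomial.X 0) f with hg
  set ψ : MvPolynomial (Fin 2) F →ₐ[F] MvPolynomial (Fin 2) F :=
    MvPolynomial.aeval (fun i : Fin 2 => if i = 0 then MvPolynomial.X 0 else g) with hψdef
  have key : ∀ Q : MvPolynomial (Fin 2) F, (MvPolynomial.X 1 - g) ∣ (Q - ψ Q) := by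
    intro Q
    induction Q using MvPolynomial.induction_on with
    | C a => simp [hψdef]
    | add p q hp hq =>
      rw [map_add, add_sub_add_comm]
      exact dvd_add hp hq
    | mul_X p i hp =>
      have hx : ψ (p * MvPolynomial.X i)
          = ψ p * (if i = 0 then MvPolynomial.X 0 else g) := by
        simp [hψdef]
      rw [hx]
      have hring : p * MvPolynomial.X i - ψ p * (if i = 0 then MvPolynomial.X 0 else g)
          = (p - ψ p) * MvPolynomial.X i
            + ψ p * (MvPolynomial.X i - (if i = 0 then MvPolynomial.X 0 else g)) := by
        ring
      rw [hring]
      refine dvd_add (hp.mul_right _) (Dvd.dvd.mul_left ?_ _)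
      fin_cases i
      · simp
      · simp
  have hψP : ψ P = Polynomial.aeval (MvPolynomial.X 0 : MvPolynomial (Fin 2) F)
      (MvPolynomial.aeval
        (fun i : Fin 2 => if i = 0 then (Polynomial.X : Polynomial F) else f) P) := by
    have := MvPolynomial.comp_aeval
      (fun i : Fin 2 => if i = 0 then (Polynomial.X : Polynomial F) else f)
      (Polynomial.aeval (MvPolynomial.X 0 : MvPolynomial (Fin 2) F))
    have h2 := congrArg (fun φ => φ P) this
    simp only [AlgHom.comp_apply] at h2
    have heq : (fun i : Fin 2 => (Polynomial.aeval (MvPolynomial.X 0 : MvPolynomial (Fin 2) F))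
        (if i = 0 then (Polynomial.X : Polynomial F) else f))
        = fun i : Fin 2 => if i = 0 then MvPolynomial.X 0 else g := by
      funext i
      by_cases hi : i = 0 <;> simp [hi, hg]
    rw [heq] at h2
    rw [hψdef]
    exact h2.symm
  have := key P
  rw [hψP, h, map_zero, sub_zero] at this
  exact this

/-- Degree bound for the univariate substitution. -/
lemma natDegree_subst_le {F : Type*} [CommRing F] [Nontrivial F] (kO : ℕ) (f : Polynomial F)
    (hf : f.natDegree ≤ kO - 1) (P : MvPolynomial (Fin 2) F) :
    (MvPolynomial.aeval
      (fun i : Fin 2 => if i = 0 then (Polynomial.X : Polynomial F) else f) P).natDegree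
      ≤ MvPolynomial.weightedTotalDegree (fun i : Fin 2 => if i = 0 then 1 else kO - 1) P := by
  set w : Fin 2 → ℕ := fun i => if i = 0 then 1 else kO - 1 with hw
  conv_lhs => rw [P.as_sum, map_sum]
  apply Polynomial.natDegree_sum_le_of_forall_le
  intro d hd
  rw [MvPolynomial.aeval_monomial]
  have hprod : (d.prod fun i k =>
      (if i = 0 then (Polynomial.X : Polynomial F) else f) ^ k)
      = (Polynomial.X : Polynomial F) ^ (d 0) * f ^ (d 1) := by
    rw [Finsupp.prod_fintype _ _ (fun i => pow_zero _), Fin.prod_univ_two]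
    simp
  rw [hprod]
  have h1 : ((algebraMap F (Polynomial F)) (MvPolynomial.coeff d P)
      * ((Polynomial.X : Polynomial F) ^ (d 0) * f ^ (d 1))).natDegree
      ≤ d 0 + d 1 * (kO - 1) := by
    refine le_trans (Polynomial.natDegree_mul_le) ?_
    have : ((algebraMap F (Polynomial F)) (MvPolynomial.coeff d P)).natDegree = 0 := by
      simp [Polynomial.algebraMap_eq]
    rw [this, zero_add]
    refine le_trans (Polynomial.natDegree_mul_le) ?_
    gcongr
    · exact le_of_eq (Polynomial.natDegree_X_pow _)
    · calc (f ^ (d 1)).natDegree ≤ d 1 * f.natDegree := Polynomial.natDegree_pow_le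
        _ ≤ d 1 * (kO - 1) := by gcongr
  refine le_trans h1 ?_
  have h2 := MvPolynomial.le_weightedTotalDegree w hd
  have h3 : (Finsupp.weight w) d = d 0 + d 1 * (kO - 1) := by
    rw [Finsupp.weight_apply, Finsupp.sum_fintype _ _ (fun i => by simp), Fin.sum_univ_two]
    simp [hw, smul_eq_mul]
  rw [h3] at h2
  exact h2

/-- Root multiplicity of the univariate substitution at an interpolation point. -/
lemma pow_X_sub_C_dvd_subst {F : Type*} [CommRing F] (f : Polynomial F)
    (P : MvPolynomial (Fin 2) F) (b : F) (m : ℕ)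
    (hm : passesWithMult P b (Polynomial.eval b f) m) :
    (Polynomial.X - Polynomial.C b) ^ m ∣
      MvPolynomial.aeval
        (fun i : Fin 2 => if i = 0 then (Polynomial.X : Polynomial F) else f) P := by
  set a : F := Polynomial.eval b f with ha
  set h : Polynomial F := f.comp (Polynomial.X + Polynomial.C b) - Polynomial.C a with hh
  have hXh : (Polynomial.X : Polynomial F) ∣ h := by
    rw [Polynomial.X_dvd_iff, hh]
    rw [Polynomial.coeff_sub, Polynomial.coeff_zero_eq_eval_zero, Polynomial.eval_comp]
    simp [ha]
  set Ps : MvPolynomial (Fin 2) F := shiftAt b a P with hPs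
  set σ : Fin 2 → Polynomial F := fun i => if i = 0 then Polynomial.X else h with hσ
  -- X^m divides the substitution of the shifted polynomial
  have hq' : (Polynomial.X : Polynomial F) ^ m ∣ MvPolynomial.aeval σ Ps := by
    conv_rhs => rw [Ps.as_sum, map_sum]
    refine Finset.dvd_sum ?_
    intro d hd
    rw [MvPolynomial.aeval_monomial]
    refine Dvd.dvd.mul_left ?_ _
    have hprod : (d.prod fun i k => σ i ^ k) = Polynomial.X ^ (d 0) * h ^ (d 1) := by
      rw [Finsupp.prod_fintype _ _ (fun i => pow_zero _), Fin.prod_univ_two]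
      simp [hσ]
    rw [hprod]
    have hdm : m ≤ d 0 + d 1 := by
      by_contra hc
      push_neg at hc
      exact (MvPolynomial.mem_support_iff.mp hd) (hm d hc)
    calc (Polynomial.X : Polynomial F) ^ m ∣ Polynomial.X ^ (d 0 + d 1) :=
          pow_dvd_pow _ hdm
      _ = Polynomial.X ^ (d 0) * Polynomial.X ^ (d 1) := pow_add _ _ _
      _ ∣ Polynomial.X ^ (d 0) * h ^ (d 1) :=
          mul_dvd_mul_left _ (pow_dvd_pow_of_dvd hXh _)
  -- the substitution of the shifted polynomial is q composed with X + C b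
  have hcomp : MvPolynomial.aeval σ Ps
      = (MvPolynomial.aeval
          (fun i : Fin 2 => if i = 0 then (Polynomial.X : Polynomial F) else f) P).comp
        (Polynomial.X + Polynomial.C b) := by
    rw [hPs, shiftAt, MvPolynomial.aeval_bind₁]
    rw [comp_eq_aeval']
    have := MvPolynomial.comp_aeval
      (fun i : Fin 2 => if i = 0 then (Polynomial.X : Polynomial F) else f)
      (Polynomial.aeval (Polynomial.X + Polynomial.C b : Polynomial F))
    have h2 := congrArg (fun φ => φ P) this
    simp only [AlgHom.comp_apply] at h2
    rw [h2]
    have heqL : (fun i : Fin 2 => (MvPolynomial.aeval σ)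
        (MvPolynomial.X i + MvPolynomial.C (if i = 0 then b else a)))
        = fun i : Fin 2 => if i = 0 then Polynomial.X + Polynomial.C b
            else f.comp (Polynomial.X + Polynomial.C b) := by
      funext i
      rw [map_add, MvPolynomial.aeval_X, MvPolynomial.aeval_C]
      by_cases hi : i = 0
      · simp [hi, hσ, Polynomial.algebraMap_eq]
      · simp only [hi, if_false, hσ, hh, Polynomial.algebraMap_eq]
        ring
    have heqR : (fun i : Fin 2 => (Polynomial.aeval
        (Polynomial.X + Polynomial.C b : Polynomial F))
        (if i = 0 then (Polynomial.X : Polynomial F) else f))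
        = fun i : Fin 2 => if i = 0 then Polynomial.X + Polynomial.C b
            else f.comp (Polynomial.X + Polynomial.C b) := by
      funext i
      by_cases hi : i = 0
      · simp [hi]
      · simp only [hi, if_false]
        rw [← comp_eq_aeval']
    rw [heqL, heqR]
  rw [hcomp] at hq'
  obtain ⟨t, ht⟩ := hq'
  have := congrArg (fun p => p.comp (Polynomial.X - Polynomial.C b)) ht
  simp only [Polynomial.mul_comp, Polynomial.pow_comp, Polynomial.X_comp,
    Polynomial.comp_assoc] at this
  have hXX : (Polynomial.X + Polynomial.C b).comp (Polynomial.X - Polynomial.C b)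
      = (Polynomial.X : Polynomial F) := by
    simp [Polynomial.add_comp]
  rw [hXX, Polynomial.comp_X] at this
  exact ⟨_, this⟩

/-- Guruswami–Sudan list-recovery success condition: if the codeword
`(f(β_1),…,f(β_L))` of the `[L,k_O]` Reed–Solomon code satisfies
`⟨M, C_c⟩ ≥ √(2(k_O-1)·C(M))`, then any nonzero bivariate polynomial `P` of
`(1, k_O-1)`-weighted degree `< √(2(k_O-1)·C(M))` passing through each point
`(β_j, α)` with multiplicity `m_{α,j}` is divisible by `y - f(x)`. -/
theorem stmt14 {F : Type*} [Field F] [Fintype F] (L kO : ℕ) (hL : 0 < L) (hkO : 1 ≤ kO)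
    (β : Fin L → F) (hβ : Function.Injective β)
    (mMat : F → Fin L → ℕ)
    (f : Polynomial F) (hf : f.natDegree < kO)
    (costM : ℝ)
    (hcost : costM = (1 / 2) * ∑ a : F, ∑ j : Fin L, (mMat a j : ℝ) * ((mMat a j : ℝ) + 1))
    (hdot : Real.sqrt (2 * ((kO : ℝ) - 1) * costM)
      ≤ ∑ j : Fin L, (mMat (Polynomial.eval (β j) f) j : ℝ))
    (P : MvPolynomial (Fin 2) F) (hP : P ≠ 0)
    (hw : ((MvPolynomial.weightedTotalDegree
        (fun i : Fin 2 => if i = 0 then 1 else kO - 1) P : ℕ) : ℝ)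
      < Real.sqrt (2 * ((kO : ℝ) - 1) * costM))
    (hmult : ∀ (a : F) (j : Fin L), passesWithMult P (β j) a (mMat a j)) :
    (MvPolynomial.X 1 - Polynomial.aeval (MvPolynomial.X 0 : MvPolynomial (Fin 2) F) f) ∣ P := by
  set q : Polynomial F := MvPolynomial.aeval
    (fun i : Fin 2 => if i = 0 then (Polynomial.X : Polynomial F) else f) P with hqdef
  set mj : Fin L → ℕ := fun j => mMat (Polynomial.eval (β j) f) j with hmj
  have hq0 : q = 0 := by
    by_contra hq
    -- each root divides
    have hroot : ∀ j : Fin L, (Polynomial.X - Polynomial.C (β j)) ^ (mj j) ∣ q :=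
      fun j => pow_X_sub_C_dvd_subst f P (β j) (mj j) (hmult _ j)
    have hcop : ((Finset.univ : Finset (Fin L)) : Set (Fin L)).Pairwise
        (Function.onFun IsCoprime fun j => (Polynomial.X - Polynomial.C (β j)) ^ (mj j)) := by
      intro i _ j _ hij
      exact ((Polynomial.pairwise_coprime_X_sub_C hβ) hij).pow
    have hdvd : (∏ j : Fin L, (Polynomial.X - Polynomial.C (β j)) ^ (mj j)) ∣ q :=
      Finset.prod_dvd_of_coprime hcop (fun j _ => hroot j)
    have hdeg := Polynomial.natDegree_le_of_dvd hdvd hq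
    have hprodeg : (∏ j : Fin L, (Polynomial.X - Polynomial.C (β j)) ^ (mj j)).natDegree
        = ∑ j : Fin L, mj j := by
      rw [Polynomial.natDegree_prod _ _ (fun j _ =>
        pow_ne_zero _ (Polynomial.X_sub_C_ne_zero (β j)))]
      simp [Polynomial.natDegree_pow, Polynomial.natDegree_X_sub_C]
    rw [hprodeg] at hdeg
    have hdegw : q.natDegree ≤ MvPolynomial.weightedTotalDegree
        (fun i : Fin 2 => if i = 0 then 1 else kO - 1) P :=
      natDegree_subst_le kO f (Nat.le_sub_one_of_lt hf) P
    have hlt : ((MvPolynomial.weightedTotalDegree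
        (fun i : Fin 2 => if i = 0 then 1 else kO - 1) P : ℕ) : ℝ)
        < ((∑ j : Fin L, mj j : ℕ) : ℝ) := by
      refine lt_of_lt_of_le hw (le_trans hdot (le_of_eq ?_))
      rw [hmj]
      push_cast
      rfl
    have hlt' : MvPolynomial.weightedTotalDegree
        (fun i : Fin 2 => if i = 0 then 1 else kO - 1) P < ∑ j : Fin L, mj j := by
      exact_mod_cast hlt
    omega
  exact dvd_of_subst_eq_zero f P hq0
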